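/- Let τ be an automorphism of a quiver Q (a permutation of nodes with B[τ(i)][τ(j)] = B[i][j] for all i,j), and let O be a τ-orbit of nodes such that B[i][j] = 0 for all i,j in O. Then the quiver obtained by mutating at every node of O (in any order; the mutations commute) again admits τ as an automorphism. -/

import Mathlib

/-- Quiver mutation at node `k`, encoded on skew-symmetric integer matrices. -/
def qMut {n : ℕ} (B : Matrix (Fin n) (Fin n) ℤ) (k : Fin n) : Matrix (Fin n) (Fin n) ℤ :=
  fun i j => if i = k ∨ j = k then -B i j
    else B i j + (|B i k| * B k j + B i k * |B k j|) / 2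

/-- Correction term in quiver mutation. -/
def corr (a b : ℤ) : ℤ := (|a| * b + a * |b|) / 2

lemma corr_zero_left (b : ℤ) : corr 0 b = 0 := by simp [corr]

lemma corr_zero_right (a : ℤ) : corr a 0 = 0 := by simp [corr]

lemma qMut_eq_corr {n : ℕ} (B : Matrix (Fin n) (Fin n) ℤ) (k i j : Fin n) :
    qMut B k i j = if i = k ∨ j = k then -B i j else B i j + corr (B i k) (B k j) := rfl

/-- Closed form of group mutation at a set with no internal arrows. -/
def gMut {n : ℕ} (B : Matrix (Fin n) (Fin n) ℤ) (S : Finset (Fin n)) :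
    Matrix (Fin n) (Fin n) ℤ :=
  fun i j => if i ∈ S ∨ j ∈ S then -B i j
    else B i j + ∑ k ∈ S, corr (B i k) (B k j)

lemma noarrow_qMut {n : ℕ} (B : Matrix (Fin n) (Fin n) ℤ) (O : Finset (Fin n))
    (k : Fin n) (hk : k ∈ O) (hz : ∀ i ∈ O, ∀ j ∈ O, B i j = 0) :
    ∀ i ∈ O, ∀ j ∈ O, qMut B k i j = 0 := by
  intro i hi j hj
  rw [qMut_eq_corr]
  split
  · rw [hz i hi j hj]; ring
  · rw [hz i hi j hj, hz i hi k hk, corr_zero_left]; ring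

lemma gMut_qMut {n : ℕ} (B : Matrix (Fin n) (Fin n) ℤ) (O S : Finset (Fin n))
    (k : Fin n) (hk : k ∈ O) (hkS : k ∉ S) (hSO : ∀ x ∈ S, x ∈ O)
    (hz : ∀ i ∈ O, ∀ j ∈ O, B i j = 0) :
    gMut (qMut B k) S = gMut B (insert k S) := by
  funext i j
  unfold gMut
  by_cases h1 : i ∈ S ∨ j ∈ S
  · rw [if_pos h1, if_pos (h1.imp Finset.mem_insert_of_mem Finset.mem_insert_of_mem)]
    congr 1
    rw [qMut_eq_corr]
    rcases eq_or_ne i k with rfl | hik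
    · have hjS : j ∈ S := h1.resolve_left (by exact fun h => hkS h)
      rw [if_pos (Or.inl rfl), hz i hk j (hSO j hjS)]; ring
    · rcases eq_or_ne j k with rfl | hjk
      · have hiS : i ∈ S := h1.resolve_right (by exact fun h => hkS h)
        rw [if_pos (Or.inr rfl), hz i (hSO i hiS) j hk]; ring
      · rw [if_neg (by tauto)]
        rcases h1 with hiS | hjS
        · rw [hz i (hSO i hiS) k hk, corr_zero_left]; ring
        · rw [hz k hk j (hSO j hjS), corr_zero_right]; ring
  · push_neg at h1
    obtain ⟨hiS, hjS⟩ := h1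
    rw [if_neg (by tauto)]
    rcases eq_or_ne i k with rfl | hik
    · rw [if_pos (Or.inl (Finset.mem_insert_self _ _))]
      rw [qMut_eq_corr, if_pos (Or.inl rfl)]
      have hsum : ∀ k' ∈ S, corr (qMut B i i k') (qMut B i k' j) = 0 := by
        intro k' hk'
        rw [noarrow_qMut B O i hk hz i hk k' (hSO k' hk'), corr_zero_left]
      rw [Finset.sum_congr rfl hsum, Finset.sum_const_zero]; ring
    · rcases eq_or_ne j k with rfl | hjk
      · rw [if_pos (Or.inr (Finset.mem_insert_self _ _))]
        rw [qMut_eq_corr, if_pos (Or.inr rfl)]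
        have hsum : ∀ k' ∈ S, corr (qMut B j i k') (qMut B j k' j) = 0 := by
          intro k' hk'
          rw [noarrow_qMut B O j hk hz k' (hSO k' hk') j hk, corr_zero_right]
        rw [Finset.sum_congr rfl hsum, Finset.sum_const_zero]; ring
      · rw [if_neg (by
          rintro (h | h)
          · rcases Finset.mem_insert.mp h with h | h
            · exact hik h
            · exact hiS h
          · rcases Finset.mem_insert.mp h with h | h
            · exact hjk h
            · exact hjS h)]
        rw [Finset.sum_insert hkS]
        rw [qMut_eq_corr, if_neg (by tauto)]
        have hsum : ∀ k' ∈ S, corr (qMut B k i k') (qMut B k k' j)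
            = corr (B i k') (B k' j) := by
          intro k' hk'
          have h1 : qMut B k i k' = B i k' := by
            rw [qMut_eq_corr, if_neg (by push_neg; exact ⟨hik, fun h => hkS (h ▸ hk')⟩)]
            rw [hz k hk k' (hSO k' hk'), corr_zero_right]; ring
          have h2 : qMut B k k' j = B k' j := by
            rw [qMut_eq_corr, if_neg (by push_neg; exact ⟨fun h => hkS (h ▸ hk'), hjk⟩)]
            rw [hz k' (hSO k' hk') k hk, corr_zero_left]; ring
          rw [h1, h2]
        rw [Finset.sum_congr rfl hsum]; ring

lemma foldl_eq_gMut {n : ℕ} (O : Finset (Fin n)) :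
    ∀ (l : List (Fin n)) (B : Matrix (Fin n) (Fin n) ℤ), l.Nodup →
      (∀ x ∈ l, x ∈ O) → (∀ i ∈ O, ∀ j ∈ O, B i j = 0) →
      l.foldl qMut B = gMut B l.toFinset := by
  intro l
  induction l with
  | nil =>
    intro B _ _ _
    funext i j
    simp [gMut]
  | cons k t ih =>
    intro B hnd hlO hz
    have hk : k ∈ O := hlO k List.mem_cons_self
    have hkt : k ∉ t := (List.nodup_cons.mp hnd).1
    have hkS : k ∉ t.toFinset := fun h => hkt (List.mem_toFinset.mp h)
    have hz' : ∀ i ∈ O, ∀ j ∈ O, qMut B k i j = 0 := noarrow_qMut B O k hk hz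
    have := ih (qMut B k) (List.nodup_cons.mp hnd).2
      (fun x hx => hlO x (List.mem_cons_of_mem _ hx)) hz'
    calc (k :: t).foldl qMut B = t.foldl qMut (qMut B k) := rfl
      _ = gMut (qMut B k) t.toFinset := this
      _ = gMut B (insert k t.toFinset) :=
          gMut_qMut B O t.toFinset k hk hkS
            (fun x hx => hlO x (List.mem_cons_of_mem _ (List.mem_toFinset.mp hx))) hz
      _ = gMut B (k :: t).toFinset := by rw [List.toFinset_cons]

/-- If `τ` is an automorphism of the quiver `B` and `O` is a `τ`-orbit with no arrows
between its nodes, then the group mutation at `O` (the composition of the mutations at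
the nodes of `O`, in any order) yields a quiver on which `τ` again acts as an
automorphism. -/
theorem group_mutation_automorphism {n : ℕ} (B : Matrix (Fin n) (Fin n) ℤ)
    (τ : Equiv.Perm (Fin n))
    (hskew : ∀ i j, B j i = -B i j)
    (haut : ∀ i j, B (τ i) (τ j) = B i j)
    (O : Finset (Fin n))
    (hOclosed : ∀ i ∈ O, τ i ∈ O)
    (hOorbit : ∀ i ∈ O, ∀ j ∈ O, ∃ m : ℕ, (τ ^ m) i = j)
    (hnoarrow : ∀ i ∈ O, ∀ j ∈ O, B i j = 0)
    (l : List (Fin n)) (hl : l.Nodup) (hlO : l.toFinset = O) :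
    ∀ i j, (l.foldl qMut B) (τ i) (τ j) = (l.foldl qMut B) i j := by
  intro i j
  rw [foldl_eq_gMut O l B hl (fun x hx => hlO ▸ List.mem_toFinset.mpr hx) hnoarrow, hlO]
  -- τ restricts to a bijection of O
  have himg : O.image τ = O := by
    apply Finset.eq_of_subset_of_card_le
    · intro x hx
      obtain ⟨y, hy, rfl⟩ := Finset.mem_image.mp hx
      exact hOclosed y hy
    · rw [Finset.card_image_of_injective _ τ.injective]
  have hmem : ∀ x, τ x ∈ O ↔ x ∈ O := by
    intro x
    constructor
    · intro hx
      rw [← himg] at hx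
      obtain ⟨y, hy, hyx⟩ := Finset.mem_image.mp hx
      exact (τ.injective hyx) ▸ hy
    · exact hOclosed x
  unfold gMut
  have hcond : ((τ i ∈ O ∨ τ j ∈ O) ↔ (i ∈ O ∨ j ∈ O)) := by rw [hmem, hmem]
  by_cases h : i ∈ O ∨ j ∈ O
  · rw [if_pos (hcond.mpr h), if_pos h, haut]
  · rw [if_neg (fun h' => h (hcond.mp h')), if_neg h, haut]
    congr 1
    calc ∑ k ∈ O, corr (B (τ i) k) (B k (τ j))
        = ∑ k ∈ O.image τ, corr (B (τ i) k) (B k (τ j)) := by rw [himg]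
      _ = ∑ k ∈ O, corr (B (τ i) (τ k)) (B (τ k) (τ j)) :=
          Finset.sum_image (fun a _ b _ h => τ.injective h)
      _ = ∑ k ∈ O, corr (B i k) (B k j) := by
          apply Finset.sum_congr rfl
          intro k _
          rw [haut, haut]
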